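/- Let V: ℝⁿ → ℝ be continuous, positive definite and homogeneous, and let Σ = {A₁,…,A_m} be a finite set of matrices with joint spectral radius ρ(Σ) = 1 satisfying V(A_i x) ≤ V(x) for all x ∈ ℝⁿ and all i. Then there exists a point x* with V(x*) = 1 and an infinite sequence of indices i₁, i₂, … in {1,…,m} such that V(A_{i_t}⋯A_{i₁} x*) = 1 for all t ≥ 1. -/

import Mathlib

open Matrix

/-- The entrywise ℓ¹ matrix norm (a submultiplicative matrix norm). -/
noncomputable def mnorm {n : ℕ} (A : Matrix (Fin n) (Fin n) ℝ) : ℝ :=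
  ∑ i, ∑ j, |A i j|

/-- The product A_{w 0} * A_{w 1} * ⋯ * A_{w (k-1)} of matrices from the family `A`. -/
noncomputable def wordProd {n m : ℕ} (A : Fin m → Matrix (Fin n) (Fin n) ℝ)
    {k : ℕ} (w : Fin k → Fin m) : Matrix (Fin n) (Fin n) ℝ :=
  (List.ofFn fun i => A (w i)).prod

/-- ρ_k(Σ): the maximum over length-k products of the k-th root of their norm. -/
noncomputable def rhoK {n m : ℕ} (A : Fin m → Matrix (Fin n) (Fin n) ℝ) (k : ℕ) : ℝ :=
  sSup {r : ℝ | ∃ w : Fin k → Fin m, r = mnorm (wordProd A w) ^ ((1 : ℝ) / k)}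

/-- The joint spectral radius, realized as inf over k ≥ 1 of ρ_k (which equals
lim_{k→∞} ρ_k for submultiplicative norms). -/
noncomputable def jsr {n m : ℕ} (A : Fin m → Matrix (Fin n) (Fin n) ℝ) : ℝ :=
  ⨅ k : ℕ, rhoK A (k + 1)


namespace StmtAux
variable {n m : ℕ}

/-- The trajectory of the switched system. -/
def traj (A : Fin m → Matrix (Fin n) (Fin n) ℝ) (seq : ℕ → Fin m) (x0 : Fin n → ℝ) : ℕ → (Fin n → ℝ)
  | 0 => x0
  | (t+1) => (A (seq t)).mulVec (traj A seq x0 t)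

lemma traj_congr {A : Fin m → Matrix (Fin n) (Fin n) ℝ} {seq seq' : ℕ → Fin m} {x0 : Fin n → ℝ}
    {t : ℕ} (h : ∀ s < t, seq s = seq' s) : traj A seq x0 t = traj A seq' x0 t := by
  induction t with
  | zero => rfl
  | succ t ih =>
      simp only [traj, h t (by omega), ih (fun s hs => h s (by omega))]

lemma traj_add (A : Fin m → Matrix (Fin n) (Fin n) ℝ) (seq : ℕ → Fin m) (x0 : Fin n → ℝ)
    (a t : ℕ) : traj A seq x0 (a + t) = traj A (fun r => seq (a + r)) (traj A seq x0 a) t := by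
  induction t with
  | zero => rfl
  | succ t ih => show traj A seq x0 ((a+t)+1) = _ ; simp only [traj, ih]

lemma traj_smul (A : Fin m → Matrix (Fin n) (Fin n) ℝ) (seq : ℕ → Fin m) (x0 : Fin n → ℝ)
    (c : ℝ) (t : ℕ) : traj A seq (c • x0) t = c • traj A seq x0 t := by
  induction t with
  | zero => rfl
  | succ t ih => simp only [traj, ih, Matrix.mulVec_smul]

lemma traj_continuous (A : Fin m → Matrix (Fin n) (Fin n) ℝ) (seq : ℕ → Fin m) (t : ℕ) :
    Continuous fun x0 => traj A seq x0 t := by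
  induction t with
  | zero => exact continuous_id
  | succ t ih =>
      have hc : Continuous fun y : Fin n → ℝ => (A (seq t)).mulVec y := by
        apply continuous_pi
        intro i
        simp only [Matrix.mulVec, dotProduct]
        exact continuous_finset_sum _ fun j _ => (continuous_const.mul (continuous_apply j))
      exact hc.comp ih

def seqOf (hm : 0 < m) {k : ℕ} (w : Fin k → Fin m) : ℕ → Fin m :=
  fun t => if h : t < k then w ⟨k - 1 - t, by omega⟩ else ⟨0, hm⟩

lemma wordProd_succ (A : Fin m → Matrix (Fin n) (Fin n) ℝ) {k : ℕ} (w : Fin (k+1) → Fin m) :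
    wordProd A w = A (w 0) * wordProd A (fun i : Fin k => w i.succ) := by
  simp [wordProd, List.ofFn_succ]

lemma traj_seqOf (hm : 0 < m) (A : Fin m → Matrix (Fin n) (Fin n) ℝ) :
    ∀ (k : ℕ) (w : Fin k → Fin m) (x : Fin n → ℝ),
      traj A (seqOf hm w) x k = (wordProd A w).mulVec x
  | 0, w, x => by
      simp [traj, wordProd, Matrix.one_mulVec]
  | (k+1), w, x => by
      have h1 : traj A (seqOf hm w) x k = traj A (seqOf hm (fun i : Fin k => w i.succ)) x k := by
        apply traj_congr
        intro s hs
        have hs' : s < k + 1 := by omega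
        simp only [seqOf, dif_pos hs, dif_pos hs']
        congr 1
        apply Fin.ext
        simp [Fin.succ]
        omega
      have h2 : seqOf hm w k = w 0 := by
        simp only [seqOf, dif_pos (Nat.lt_succ_self k)]
        congr 1
        apply Fin.ext
        simp
      show (A (seqOf hm w k)).mulVec (traj A (seqOf hm w) x k) = _
      rw [h1, h2, traj_seqOf hm A k, Matrix.mulVec_mulVec, ← wordProd_succ]

lemma mnorm_nonneg {n : ℕ} (A : Matrix (Fin n) (Fin n) ℝ) : 0 ≤ mnorm A := by
  unfold mnorm; positivity

end StmtAux

open StmtAux Filter Topology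

/-- If ρ(Σ) = 1 and V is a continuous, positive definite, homogeneous nonincreasing
Lyapunov function, then there is a point on the unit level set of V and an infinite
switching sequence along which V stays equal to one. -/
theorem stmt_11 {n m : ℕ} (hm : 0 < m) (A : Fin m → Matrix (Fin n) (Fin n) ℝ)
    (V : (Fin n → ℝ) → ℝ) (d : ℝ) (hd : 0 < d)
    (hcont : Continuous V) (hV0 : V 0 = 0)
    (hpos : ∀ x : Fin n → ℝ, x ≠ 0 → 0 < V x)
    (hhom : ∀ (l : ℝ), 0 < l → ∀ x, V (l • x) = l ^ d * V x)
    (hjsr : jsr A = 1)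
    (hdec : ∀ (i : Fin m) (x : Fin n → ℝ), V ((A i).mulVec x) ≤ V x) :
    ∃ (xstar : Fin n → ℝ), V xstar = 1 ∧
      ∃ (seq : ℕ → Fin m) (x : ℕ → (Fin n → ℝ)),
        x 0 = xstar ∧ (∀ t, x (t + 1) = (A (seq t)).mulVec (x t)) ∧
        ∀ t, V (x t) = 1 := by
  rcases Nat.eq_zero_or_pos n with hn | hn
  · -- n = 0 : the jsr is 0, contradicting hjsr
    exfalso
    subst hn
    have hr : ∀ k : ℕ, rhoK A (k+1) = 0 := by
      intro k
      have hset : {r : ℝ | ∃ w : Fin (k+1) → Fin m, r = mnorm (wordProd A w) ^ ((1 : ℝ) / ((k+1:ℕ):ℝ))} = {0} := by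
        ext r
        simp only [Set.mem_setOf_eq, Set.mem_singleton_iff]
        constructor
        · rintro ⟨w, rfl⟩
          have : mnorm (wordProd A w) = 0 := by simp [mnorm]
          rw [this, Real.zero_rpow (by positivity)]
        · rintro rfl
          refine ⟨fun _ => ⟨0, hm⟩, ?_⟩
          have : mnorm (wordProd A (fun _ : Fin (k+1) => (⟨0, hm⟩ : Fin m))) = 0 := by
            simp [mnorm]
          rw [this, Real.zero_rpow (by positivity)]
      rw [rhoK, hset, csSup_singleton]
    have : jsr A = 0 := by simp [jsr, hr]
    rw [this] at hjsr
    norm_num at hjsr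
  -- n ≥ 1 from here on
  haveI : Nonempty (Fin n) := ⟨⟨0, hn⟩⟩
  -- Step 1: for every positive length there is a word whose product has norm ≥ 1
  have hword : ∀ k : ℕ, 0 < k → ∃ w : Fin k → Fin m, 1 ≤ mnorm (wordProd A w) := by
    intro k hk
    obtain ⟨k', rfl⟩ : ∃ k', k = k' + 1 := ⟨k - 1, by omega⟩
    haveI : Nonempty (Fin m) := ⟨⟨0, hm⟩⟩
    have hsetq : ∀ j : ℕ, {r : ℝ | ∃ w : Fin (j+1) → Fin m, r = mnorm (wordProd A w) ^ ((1 : ℝ) / ((j:ℝ)+1))}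
        = Set.range (fun w : Fin (j+1) → Fin m => mnorm (wordProd A w) ^ ((1:ℝ)/((j:ℝ)+1))) := by
      intro j; ext r; simp [eq_comm, Set.range]
    have hcast : ∀ j : ℕ, (((j+1 : ℕ)) : ℝ) = (j:ℝ)+1 := by intro j; push_cast; ring
    have hnn : ∀ j : ℕ, 0 ≤ rhoK A (j + 1) := by
      intro j
      apply Real.sSup_nonneg
      rintro x ⟨w, rfl⟩
      exact Real.rpow_nonneg (mnorm_nonneg _) _
    have h1 : (1:ℝ) ≤ rhoK A (k' + 1) := by
      rw [← hjsr]
      exact ciInf_le ⟨0, by rintro x ⟨j, rfl⟩; exact hnn j⟩ k'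
    have hmem : rhoK A (k' + 1) ∈ {r : ℝ | ∃ w : Fin (k'+1) → Fin m, r = mnorm (wordProd A w) ^ ((1 : ℝ) / ((k':ℝ)+1))} := by
      rw [rhoK, hcast k', hsetq k']
      exact Set.Nonempty.csSup_mem (Set.range_nonempty _) (Set.finite_range _)
    obtain ⟨w, hw⟩ := hmem
    refine ⟨w, ?_⟩
    rw [hw] at h1
    by_contra hlt
    push_neg at hlt
    have := Real.rpow_lt_one (mnorm_nonneg _) hlt (by positivity : (0:ℝ) < (1:ℝ)/((k':ℝ)+1))
    linarith
  -- Step 2: extremal values of V on the unit sphere, and the sandwich bounds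
  have hsne : (Metric.sphere (0 : Fin n → ℝ) 1).Nonempty :=
    NormedSpace.sphere_nonempty.mpr zero_le_one
  have hscomp : IsCompact (Metric.sphere (0 : Fin n → ℝ) 1) := isCompact_sphere 0 1
  obtain ⟨u₁, hu₁, hmin⟩ := hscomp.exists_isMinOn hsne hcont.continuousOn
  obtain ⟨u₂, hu₂, hmax⟩ := hscomp.exists_isMaxOn hsne hcont.continuousOn
  set c₁ := V u₁ with hc₁
  set c₂ := V u₂ with hc₂
  have hu₁0 : u₁ ≠ 0 := by
    intro h; rw [mem_sphere_zero_iff_norm, h, norm_zero] at hu₁; norm_num at hu₁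
  have hu₂0 : u₂ ≠ 0 := by
    intro h; rw [mem_sphere_zero_iff_norm, h, norm_zero] at hu₂; norm_num at hu₂
  have hc₁pos : 0 < c₁ := hpos u₁ hu₁0
  have hc₂pos : 0 < c₂ := hpos u₂ hu₂0
  have hsand : ∀ y : Fin n → ℝ, c₁ * ‖y‖ ^ d ≤ V y ∧ V y ≤ c₂ * ‖y‖ ^ d := by
    intro y
    rcases eq_or_ne y 0 with rfl | hy
    · rw [hV0, norm_zero, Real.zero_rpow hd.ne']
      norm_num
    · have hr : 0 < ‖y‖ := norm_pos_iff.mpr hy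
      set u := ‖y‖⁻¹ • y with hu
      have hus : u ∈ Metric.sphere (0 : Fin n → ℝ) 1 := by
        rw [mem_sphere_zero_iff_norm, hu, norm_smul, norm_inv, norm_norm,
          inv_mul_cancel₀ hr.ne']
      have hyu : y = ‖y‖ • u := by
        rw [hu, smul_smul, mul_inv_cancel₀ hr.ne', one_smul]
      have hVy : V y = ‖y‖ ^ d * V u := by
        conv_lhs => rw [hyu]
        exact hhom _ hr u
      have h1 : c₁ ≤ V u := hmin hus
      have h2 : V u ≤ c₂ := hmax hus
      have hrd : 0 < ‖y‖ ^ d := Real.rpow_pos_of_pos hr d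
      constructor
      · rw [hVy]; nlinarith
      · rw [hVy]; nlinarith
  -- Step 3: a uniform δ
  have hdelta : ∃ δ : ℝ, 0 < δ ∧ ∀ P : Matrix (Fin n) (Fin n) ℝ, 1 ≤ mnorm P →
      ∃ u, V u = 1 ∧ δ ≤ V (P.mulVec u) := by
    refine ⟨c₂⁻¹ * (c₁ * (((n:ℝ) ^ 2)⁻¹) ^ d), ?_, ?_⟩
    · have hnpos : (0:ℝ) < (n:ℝ) := by exact_mod_cast hn
      have : (0:ℝ) < (((n:ℝ)^2)⁻¹) ^ d := Real.rpow_pos_of_pos (by positivity) d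
      positivity
    intro P hP
    have hnpos : (0:ℝ) < (n:ℝ) := by exact_mod_cast hn
    have hentry : ∃ i j, ((n:ℝ) ^ 2)⁻¹ ≤ |P i j| := by
      by_contra h
      push_neg at h
      have hlt : mnorm P < 1 := by
        have h1 : mnorm P < ∑ _i : Fin n, ∑ _j : Fin n, ((n:ℝ)^2)⁻¹ := by
          apply Finset.sum_lt_sum_of_nonempty (Finset.univ_nonempty)
          intro i _
          apply Finset.sum_lt_sum_of_nonempty (Finset.univ_nonempty)
          intro j _
          exact h i j
        have h2 : ∑ _i : Fin n, ∑ _j : Fin n, ((n:ℝ)^2)⁻¹ = 1 := by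
          simp [Finset.sum_const, Finset.card_univ]
          field_simp
        linarith
      linarith
    obtain ⟨i, j, hij⟩ := hentry
    set e : Fin n → ℝ := Pi.single j 1 with he
    have hPe : ((n:ℝ) ^ 2)⁻¹ ≤ ‖P.mulVec e‖ := by
      have h1 : P.mulVec e i = P i j := by
        simp [he, Matrix.mulVec_single]
      calc ((n:ℝ)^2)⁻¹ ≤ |P i j| := hij
        _ = ‖P.mulVec e i‖ := by rw [h1, Real.norm_eq_abs]
        _ ≤ ‖P.mulVec e‖ := norm_le_pi_norm _ i
    have hee : ‖e‖ ≤ 1 := by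
      rw [pi_norm_le_iff_of_nonneg zero_le_one]
      intro i'
      rw [he, Real.norm_eq_abs, Pi.single_apply]
      split <;> simp
    have he0 : e ≠ 0 := by
      intro h
      have := congrFun h j
      simp [he] at this
    have hVe : 0 < V e := hpos e he0
    have hVec : V e ≤ c₂ := by
      calc V e ≤ c₂ * ‖e‖ ^ d := (hsand e).2
        _ ≤ c₂ * 1 := by
            apply mul_le_mul_of_nonneg_left _ hc₂pos.le
            exact Real.rpow_le_one (norm_nonneg _) hee hd.le
        _ = c₂ := mul_one _
    set l := (V e)⁻¹ ^ ((1:ℝ)/d) with hl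
    have hlpos : 0 < l := Real.rpow_pos_of_pos (inv_pos.mpr hVe) _
    have hld : l ^ d = (V e)⁻¹ := by
      rw [hl, ← Real.rpow_mul (inv_nonneg.mpr hVe.le), one_div_mul_cancel hd.ne', Real.rpow_one]
    refine ⟨l • e, ?_, ?_⟩
    · rw [hhom l hlpos, hld, inv_mul_cancel₀ hVe.ne']
    · rw [Matrix.mulVec_smul, hhom l hlpos, hld]
      have hPe0 : V (P.mulVec e) ≥ c₁ * (((n:ℝ)^2)⁻¹) ^ d := by
        calc c₁ * (((n:ℝ)^2)⁻¹) ^ d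
            ≤ c₁ * ‖P.mulVec e‖ ^ d := by
              apply mul_le_mul_of_nonneg_left _ hc₁pos.le
              exact Real.rpow_le_rpow (by positivity) hPe hd.le
          _ ≤ V (P.mulVec e) := (hsand _).1
      have hinv : c₂⁻¹ ≤ (V e)⁻¹ := by
        apply inv_anti₀ hVe hVec
      calc c₂⁻¹ * (c₁ * (((n:ℝ)^2)⁻¹) ^ d)
          ≤ (V e)⁻¹ * (c₁ * (((n:ℝ)^2)⁻¹) ^ d) := by
            apply mul_le_mul_of_nonneg_right hinv
            have : (0:ℝ) < (((n:ℝ)^2)⁻¹) ^ d := Real.rpow_pos_of_pos (by positivity) d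
            positivity
        _ ≤ (V e)⁻¹ * V (P.mulVec e) := by
            apply mul_le_mul_of_nonneg_left hPe0 (by positivity)
  obtain ⟨δ, hδ, hdelta⟩ := hdelta
  -- monotonicity of V along trajectories and the scaling helper
  have hanti : ∀ (seq : ℕ → Fin m) (x : Fin n → ℝ), Antitone fun t => V (traj A seq x t) := by
    intro seq x
    apply antitone_nat_of_succ_le
    intro t
    exact hdec (seq t) _
  have hscale : ∀ x : Fin n → ℝ, 0 < V x →
      ∀ y, V ((V x)⁻¹ ^ ((1:ℝ)/d) • y) = (V x)⁻¹ * V y := by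
    intro x hx y
    have hl : 0 < (V x)⁻¹ ^ ((1:ℝ)/d) := Real.rpow_pos_of_pos (inv_pos.mpr hx) _
    rw [hhom _ hl, ← Real.rpow_mul (inv_nonneg.mpr hx.le), one_div_mul_cancel hd.ne',
      Real.rpow_one]
  -- Step 4: almost-invariant finite trajectories of any length
  have hA : ∀ (k : ℕ) (ε : ℝ), 0 < ε → ε < 1 → ∃ z, V z = 1 ∧ ∃ seq : ℕ → Fin m,
      ∀ t ≤ k, 1 - ε ≤ V (traj A seq z t) ∧ V (traj A seq z t) ≤ 1 := by
    intro k ε hε hε1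
    obtain ⟨N, hN⟩ := exists_pow_lt_of_lt_one hδ (show 1 - ε < 1 by linarith)
    set M := N + 1 with hM
    have hMδ : (1 - ε) ^ M < δ := by
      calc (1-ε)^M = (1-ε) * (1-ε)^N := by rw [hM, pow_succ]; ring
        _ ≤ 1 * (1-ε)^N := by
            apply mul_le_mul_of_nonneg_right (by linarith) (pow_nonneg (by linarith) N)
        _ = (1-ε)^N := one_mul _
        _ < δ := hN
    set b := k + 1 with hb
    set K := M * b with hK
    have hKpos : 0 < K := by positivity
    obtain ⟨w, hw⟩ := hword K hKpos
    obtain ⟨u, hVu, hδu⟩ := hdelta _ hw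
    set seq₀ := seqOf hm w with hseq₀
    set y : ℕ → (Fin n → ℝ) := fun t => traj A seq₀ u t with hy
    have hymono : ∀ s t : ℕ, s ≤ t → V (y t) ≤ V (y s) := fun s t hst => hanti seq₀ u hst
    have hyK : δ ≤ V (y K) := by
      have h : y K = (wordProd A w).mulVec u := traj_seqOf hm A K w u
      rw [h]; exact hδu
    have hy0 : V (y 0) = 1 := hVu
    have hblock : ∃ jj < M, (1 - ε) * V (y (jj * b)) ≤ V (y ((jj + 1) * b)) := by
      by_contra h
      push_neg at h
      have hind : ∀ jj ≤ M, V (y (jj * b)) ≤ (1 - ε) ^ jj := by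
        intro jj
        induction jj with
        | zero => intro _; simpa [hy0] using le_refl (1:ℝ)
        | succ jj ih =>
            intro hjj
            have h1 := h jj (by omega)
            have h2 := ih (by omega)
            have h3 : V (y ((jj+1) * b)) < (1 - ε) * ((1-ε)^jj) := by
              calc V (y ((jj+1)*b)) < (1-ε) * V (y (jj*b)) := h1
                _ ≤ (1-ε) * ((1-ε)^jj) := by
                    apply mul_le_mul_of_nonneg_left h2 (by linarith)
            calc V (y ((jj+1)*b)) ≤ (1-ε) * ((1-ε)^jj) := h3.le
              _ = (1-ε)^(jj+1) := by rw [pow_succ]; ring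
      have := hind M le_rfl
      have hKb : V (y (M * b)) = V (y K) := by rw [hK]
      rw [hKb] at this
      linarith
    obtain ⟨jj, hjjM, hjj⟩ := hblock
    have hVyj : 0 < V (y (jj * b)) := by
      calc (0:ℝ) < δ := hδ
        _ ≤ V (y K) := hyK
        _ ≤ V (y (jj * b)) := hymono _ _ (by rw [hK]; exact Nat.mul_le_mul_right b (by omega))
    set l := (V (y (jj * b)))⁻¹ ^ ((1:ℝ)/d) with hl
    set z := l • y (jj * b) with hz
    have hVz : V z = 1 := by
      rw [hz, hl, hscale _ hVyj, inv_mul_cancel₀ hVyj.ne']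
    set seq' : ℕ → Fin m := fun r => seq₀ (jj * b + r) with hseq'
    refine ⟨z, hVz, seq', ?_⟩
    intro t ht
    have htraj : traj A seq' z t = l • y (jj * b + t) := by
      rw [hz, traj_smul]
      congr 1
      exact (traj_add A seq₀ u (jj*b) t).symm
    have hVt : V (traj A seq' z t) = (V (y (jj * b)))⁻¹ * V (y (jj * b + t)) := by
      rw [htraj, hl, hscale _ hVyj]
    constructor
    · rw [hVt]
      have h1 : (1 - ε) * V (y (jj * b)) ≤ V (y (jj * b + t)) := by
        calc (1-ε) * V (y (jj*b)) ≤ V (y ((jj+1)*b)) := hjj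
          _ ≤ V (y (jj*b + t)) := by
              apply hymono
              have h' : (jj+1)*b = jj*b + b := by ring
              have hb' : b = k + 1 := hb
              omega
      calc (1:ℝ) - ε = (V (y (jj*b)))⁻¹ * ((1-ε) * V (y (jj*b))) := by
            field_simp
        _ ≤ (V (y (jj*b)))⁻¹ * V (y (jj*b + t)) := by
            apply mul_le_mul_of_nonneg_left h1 (by positivity)
    · rw [hVt]
      have h1 : V (y (jj * b + t)) ≤ V (y (jj * b)) := hymono _ _ (by omega)
      calc (V (y (jj*b)))⁻¹ * V (y (jj*b + t)) ≤ (V (y (jj*b)))⁻¹ * V (y (jj*b)) :=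
            mul_le_mul_of_nonneg_left h1 (by positivity)
        _ = 1 := inv_mul_cancel₀ hVyj.ne'
  -- Step 5: specialize
  have hB : ∀ k : ℕ, ∃ z, V z = 1 ∧ ∃ seq : ℕ → Fin m,
      ∀ t ≤ k, 1 - 1/((k:ℝ)+2) ≤ V (traj A seq z t) ∧ V (traj A seq z t) ≤ 1 := by
    intro k
    have h2 : (0:ℝ) < (k:ℝ) + 2 := by positivity
    refine hA k (1/((k:ℝ)+2)) (by positivity) ?_
    rw [div_lt_one h2]
    linarith
  choose xs hxs seqs hseqs using hB
  -- Step 6: compactness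
  set R : ℝ := c₁⁻¹ ^ ((1:ℝ)/d) with hR
  have hball : ∀ k, xs k ∈ Metric.closedBall (0 : Fin n → ℝ) R := by
    intro k
    rw [Metric.mem_closedBall, dist_zero_right]
    have h1 : c₁ * ‖xs k‖ ^ d ≤ 1 := by rw [← hxs k]; exact (hsand _).1
    have h2 : ‖xs k‖ ^ d ≤ c₁⁻¹ := by
      rw [inv_eq_one_div, le_div_iff₀ hc₁pos, mul_comm]
      exact h1
    calc ‖xs k‖ = (‖xs k‖ ^ d) ^ ((1:ℝ)/d) := by
          rw [← Real.rpow_mul (norm_nonneg _), mul_one_div_cancel hd.ne', Real.rpow_one]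
      _ ≤ c₁⁻¹ ^ ((1:ℝ)/d) := Real.rpow_le_rpow (Real.rpow_nonneg (norm_nonneg _) _) h2 (by positivity)
  have hKcomp : IsCompact ((Metric.closedBall (0 : Fin n → ℝ) R) ×ˢ (Set.univ : Set (ℕ → Fin m))) :=
    (isCompact_closedBall _ _).prod isCompact_univ
  set p : ℕ → (Fin n → ℝ) × (ℕ → Fin m) := fun k => (xs k, seqs k) with hp
  obtain ⟨⟨xinf, sinf⟩, -, φ, hφ, htend⟩ :=
    hKcomp.tendsto_subseq (x := p) (fun k => Set.mk_mem_prod (hball k) (Set.mem_univ _))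
  have h1 : Tendsto (fun j => xs (φ j)) atTop (𝓝 xinf) :=
    (continuous_fst.tendsto _).comp htend
  have h2 : Tendsto (fun j => seqs (φ j)) atTop (𝓝 sinf) :=
    (continuous_snd.tendsto _).comp htend
  have heq : ∀ r : ℕ, ∀ᶠ j in atTop, seqs (φ j) r = sinf r := by
    intro r
    have h2r : Tendsto (fun j => seqs (φ j) r) atTop (𝓝 (sinf r)) :=
      ((continuous_apply r).tendsto _).comp h2
    exact h2r (IsOpen.mem_nhds (isOpen_discrete {sinf r}) rfl)
  have hmain : ∀ t : ℕ, V (traj A sinf xinf t) = 1 := by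
    intro t
    have hFt : Tendsto (fun j => V (traj A sinf (xs (φ j)) t)) atTop
        (𝓝 (V (traj A sinf xinf t))) :=
      ((hcont.comp (traj_continuous A sinf t)).tendsto _).comp h1
    have hev : ∀ᶠ j in atTop, V (traj A sinf (xs (φ j)) t) = V (traj A (seqs (φ j)) (xs (φ j)) t) := by
      have hall : ∀ᶠ j in atTop, ∀ r ∈ Finset.range t, seqs (φ j) r = sinf r :=
        (Filter.eventually_all_finset _).mpr (fun r _ => heq r)
      filter_upwards [hall] with j hj
      exact congrArg V (traj_congr (fun s hs => (hj s (Finset.mem_range.mpr hs)).symm))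
    have hφle : ∀ j, j ≤ φ j := fun j => hφ.le_apply
    have hub : V (traj A sinf xinf t) ≤ 1 := by
      apply le_of_tendsto hFt
      filter_upwards [hev, eventually_ge_atTop t] with j hj hjt
      rw [hj]
      exact (hseqs (φ j) t (le_trans hjt (hφle j))).2
    have hlbt : Tendsto (fun j : ℕ => 1 - 1/((j:ℝ)+2)) atTop (𝓝 1) := by
      have ha : Tendsto (fun j : ℕ => ((j:ℝ)+2)) atTop atTop :=
        tendsto_atTop_add_const_right _ 2 tendsto_natCast_atTop_atTop
      have hbt := ha.inv_tendsto_atTop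
      have hc : Tendsto (fun _ : ℕ => (1:ℝ)) atTop (𝓝 1) := tendsto_const_nhds
      have := hc.sub hbt
      simpa [one_div] using this
    have hlb : 1 ≤ V (traj A sinf xinf t) := by
      apply le_of_tendsto_of_tendsto hlbt hFt
      filter_upwards [hev, eventually_ge_atTop t] with j hj hjt
      rw [hj]
      have hb1 := (hseqs (φ j) t (le_trans hjt (hφle j))).1
      have hmono : 1 - 1/((j:ℝ)+2) ≤ 1 - 1/(((φ j):ℝ)+2) := by
        have hle : ((j:ℝ)+2) ≤ (((φ j):ℝ)+2) :=
          add_le_add_left (by exact_mod_cast hφle j) 2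
        have := one_div_le_one_div_of_le (by positivity : (0:ℝ) < (j:ℝ)+2) hle
        linarith
      linarith
    linarith
  exact ⟨xinf, hmain 0, sinf, traj A sinf xinf, rfl, fun t => rfl, hmain⟩
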